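/- (Helly's theorem for minimal axis-aligned bounding boxes) Let M = {D₁, …, D_{d+1}} be d+1 closed balls in ℝᵈ such that every d of them have nonempty intersection, and suppose D = ⋂ⱼ Dⱼ ≠ ∅. Then for every coordinate i, inf{π_i(x) : x ∈ D} = max over j of inf{π_i(x) : x ∈ ⋂_{k ≠ j} D_k}, and sup{π_i(x) : x ∈ D} = min over j of sup{π_i(x) : x ∈ ⋂_{k ≠ j} D_k}. Equivalently, AABB(M) = ⋂ⱼ₌₁^{d+1} AABB(M \ {Dⱼ}). -/

import Mathlib

open Metric EuclideanSpace

open Module in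
/-- Helly-type step: if a convex set `H` meets each intersection-with-one-ball-removed,
and the total intersection of the `d+1` convex sets is nonempty, then `H` meets the
total intersection. -/
lemma helly_halfspace_aux {d : ℕ} (B : Fin (d + 1) → Set (EuclideanSpace ℝ (Fin d)))
    (hconv : ∀ j, Convex ℝ (B j)) (H : Set (EuclideanSpace ℝ (Fin d))) (hH : Convex ℝ H)
    (hD : (⋂ j, B j).Nonempty)
    (hj : ∀ j, ((⋂ k, ⋂ (_ : k ≠ j), B k) ∩ H).Nonempty) :
    ((⋂ j, B j) ∩ H).Nonempty := by
  classical
  set F : Option (Fin (d + 1)) → Set (EuclideanSpace ℝ (Fin d)) :=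
    fun o => Option.elim o H B with hF
  have key : (⋂ o ∈ (Finset.univ : Finset (Option (Fin (d + 1)))), F o).Nonempty := by
    apply Convex.helly_theorem' (𝕜 := ℝ)
    · rintro (_ | j) _
      · exact hH
      · exact hconv j
    · intro I _ hcard
      have hrank : finrank ℝ (EuclideanSpace ℝ (Fin d)) = d := finrank_euclideanSpace_fin
      rw [hrank] at hcard
      have hIc : (Iᶜ : Finset (Option (Fin (d + 1)))).Nonempty := by
        rw [← Finset.card_pos, Finset.card_compl]
        have : Fintype.card (Option (Fin (d + 1))) = d + 2 := by simp
        omega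
      obtain ⟨j₀, hj₀⟩ := hIc
      rw [Finset.mem_compl] at hj₀
      match j₀ with
      | none =>
        obtain ⟨x, hx⟩ := hD
        refine ⟨x, Set.mem_iInter₂.2 fun o ho => ?_⟩
        match o with
        | none => exact absurd ho hj₀
        | some k => exact Set.mem_iInter.1 hx k
      | some j =>
        obtain ⟨x, hx1, hx2⟩ := hj j
        refine ⟨x, Set.mem_iInter₂.2 fun o ho => ?_⟩
        match o with
        | none => exact hx2
        | some k =>
          have hkj : k ≠ j := fun h => hj₀ (h ▸ ho)
          exact Set.mem_iInter.1 (Set.mem_iInter.1 hx1 k) hkj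
  obtain ⟨x, hx⟩ := key
  rw [Set.mem_iInter₂] at hx
  exact ⟨x, Set.mem_iInter.2 fun j => hx (some j) (Finset.mem_univ _),
    hx none (Finset.mem_univ _)⟩

/-- Helly's theorem for minimal axis-aligned bounding boxes: for `d + 1` closed balls
in `ℝᵈ` whose total intersection `D` is nonempty (and every `d` of them intersect),
the extremes of the AABB of `D` in each coordinate are the max of the infima, resp.
the min of the suprema, of the coordinate over the intersections with one ball
removed; i.e. `AABB(M) = ⋂ⱼ AABB(M \ {Dⱼ})`. -/
theorem stmt_15 {d : ℕ} (c : Fin (d + 1) → EuclideanSpace ℝ (Fin d))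
    (r : Fin (d + 1) → ℝ) (hr : ∀ j, 0 < r j)
    (hpart : ∀ j, (⋂ k, ⋂ (_ : k ≠ j), closedBall (c k) (r k)).Nonempty)
    (hD : (⋂ j, closedBall (c j) (r j)).Nonempty) :
    ∀ i : Fin d,
      sInf ((fun x => x i) '' ⋂ j, closedBall (c j) (r j)) =
        ⨆ j, sInf ((fun x => x i) '' ⋂ k, ⋂ (_ : k ≠ j), closedBall (c k) (r k)) ∧
      sSup ((fun x => x i) '' ⋂ j, closedBall (c j) (r j)) =
        ⨅ j, sSup ((fun x => x i) '' ⋂ k, ⋂ (_ : k ≠ j), closedBall (c k) (r k)) := by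
  intro i
  have hd : 0 < d := i.pos
  set f : EuclideanSpace ℝ (Fin d) → ℝ := fun x => x i with hf
  have hfcont : Continuous f := (EuclideanSpace.proj (𝕜 := ℝ) i).continuous
  have hflin : IsLinearMap ℝ f := ⟨fun a b => rfl, fun m a => rfl⟩
  set D : Set (EuclideanSpace ℝ (Fin d)) := ⋂ j, closedBall (c j) (r j) with hDdef
  set Dj : Fin (d + 1) → Set (EuclideanSpace ℝ (Fin d)) :=
    fun j => ⋂ k, ⋂ (_ : k ≠ j), closedBall (c k) (r k) with hDjdef
  -- compactness
  have hDcomp : IsCompact D := by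
    have hclosed : IsClosed D := isClosed_iInter fun j => isClosed_closedBall
    have hbdd : Bornology.IsBounded D :=
      (isBounded_closedBall).subset (Set.iInter_subset _ 0)
    exact Metric.isCompact_of_isClosed_isBounded hclosed hbdd
  have hDjcomp : ∀ j, IsCompact (Dj j) := by
    intro j
    have hclosed : IsClosed (Dj j) :=
      isClosed_iInter fun k => isClosed_iInter fun _ => isClosed_closedBall
    obtain ⟨k', hk'⟩ : ∃ k' : Fin (d + 1), k' ≠ j := by
      by_cases h : j = 0
      · exact ⟨⟨1, by omega⟩, by simp [h, Fin.ext_iff]⟩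
      · exact ⟨0, fun h' => h h'.symm⟩
    have hsub : Dj j ⊆ closedBall (c k') (r k') := fun x hx =>
      Set.mem_iInter.1 (Set.mem_iInter.1 hx k') hk'
    exact Metric.isCompact_of_isClosed_isBounded hclosed
      ((isBounded_closedBall).subset hsub)
  have hDsub : ∀ j, D ⊆ Dj j := fun j x hx =>
    Set.mem_iInter.2 fun k => Set.mem_iInter.2 fun _ => Set.mem_iInter.1 hx k
  -- image compactness
  have hAcomp : IsCompact (f '' D) := hDcomp.image hfcont
  have hAjcomp : ∀ j, IsCompact (f '' Dj j) := fun j => (hDjcomp j).image hfcont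
  have hAne : (f '' D).Nonempty := hD.image f
  have hAjne : ∀ j, (f '' Dj j).Nonempty := fun j => (hpart j).image f
  constructor
  · -- sInf
    have hbddrange : BddAbove (Set.range fun j => sInf (f '' Dj j)) :=
      Set.Finite.bddAbove (Set.finite_range _)
    refine le_antisymm ?_ ?_
    · -- hard direction via Helly
      set m : ℝ := ⨆ j, sInf (f '' Dj j) with hm
      obtain ⟨x, hxD, hxH⟩ := helly_halfspace_aux (fun j => closedBall (c j) (r j))
        (fun j => convex_closedBall _ _) {x | f x ≤ m} (convex_halfSpace_le hflin m) hD
        (fun j => by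
          obtain ⟨x, hx, hfx⟩ := (hAjcomp j).sInf_mem (hAjne j)
          exact ⟨x, hx, by
            simp only [Set.mem_setOf_eq, hfx]
            exact le_ciSup hbddrange j⟩)
      exact csInf_le hAcomp.bddBelow ⟨x, hxD, rfl⟩ |>.trans hxH
    · exact ciSup_le fun j =>
        csInf_le_csInf (hAjcomp j).bddBelow hAne (Set.image_mono (f := f) (hDsub j))
  · -- sSup
    have hbddrange : BddBelow (Set.range fun j => sSup (f '' Dj j)) :=
      Set.Finite.bddBelow (Set.finite_range _)
    refine le_antisymm ?_ ?_
    · exact le_ciInf fun j =>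
        csSup_le_csSup (hAjcomp j).bddAbove hAne (Set.image_mono (f := f) (hDsub j))
    · -- hard direction via Helly
      set m : ℝ := ⨅ j, sSup (f '' Dj j) with hm
      obtain ⟨x, hxD, hxH⟩ := helly_halfspace_aux (fun j => closedBall (c j) (r j))
        (fun j => convex_closedBall _ _) {x | m ≤ f x} (convex_halfSpace_ge hflin m) hD
        (fun j => by
          obtain ⟨x, hx, hfx⟩ := (hAjcomp j).sSup_mem (hAjne j)
          exact ⟨x, hx, by
            simp only [Set.mem_setOf_eq, hfx]
            exact ciInf_le hbddrange j⟩)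
      exact hxH.trans (le_csSup hAcomp.bddAbove ⟨x, hxD, rfl⟩)
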